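/- Let p be a prime, k ≥ 1 and n ≥ 1, let δ : (ℤ/p^kℤ)^n → (ℤ/pℤ)^{nk} be the coordinatewise base-p digit map, and set D = (p−1)·((2p−2)^k − 1)/(2p−3) (for p = 2 read D = 2^k − 1). For every u ∈ (ℤ/p^kℤ)^n there exists a polynomial Q_u over ℤ/pℤ in nk variables of total degree at most D and of degree at most p−1 in each individual variable, such that for every a ∈ (ℤ/p^kℤ)^n one has: the scalar product a·u is nonzero in ℤ/p^kℤ if and only if Q_u evaluated at δ(a) equals 0. -/

import Mathlib

open Finset

section helpers

/-- exponent reduction mod `x^p = x` -/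
def redExp (p e : ℕ) : ℕ := if e = 0 then 0 else (e - 1) % (p - 1) + 1

lemma redExp_zero (p : ℕ) : redExp p 0 = 0 := by simp [redExp]

lemma redExp_le_self (p e : ℕ) : redExp p e ≤ e := by
  unfold redExp
  split
  · omega
  · have := Nat.mod_le (e - 1) (p - 1); omega

lemma redExp_le (p e : ℕ) (hp : 2 ≤ p) : redExp p e ≤ p - 1 := by
  unfold redExp
  split
  · omega
  · have : (e - 1) % (p - 1) < p - 1 := Nat.mod_lt _ (by omega)
    omega

lemma pow_redExp (p : ℕ) [Fact p.Prime] (x : ZMod p) (e : ℕ) :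
    x ^ redExp p e = x ^ e := by
  unfold redExp
  split
  · subst ‹e = 0›; rfl
  · rename_i he
    by_cases hx : x = 0
    · subst hx
      rw [zero_pow (by omega), zero_pow he]
    · have h1 : x ^ (p - 1) = 1 := ZMod.pow_card_sub_one_eq_one hx
      have hdm := Nat.div_add_mod (e - 1) (p - 1)
      have he' : e = (p - 1) * ((e - 1) / (p - 1)) + ((e - 1) % (p - 1) + 1) := by omega
      calc x ^ ((e - 1) % (p - 1) + 1)
          = (x ^ (p - 1)) ^ ((e - 1) / (p - 1)) * x ^ ((e - 1) % (p - 1) + 1) := by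
            rw [h1]; ring
        _ = x ^ e := by rw [← pow_mul, ← pow_add, ← he']

lemma geoSum (q k : ℕ) (hq : 1 ≤ q) :
    ∑ j ∈ range k, (q - 1) * q ^ j = q ^ k - 1 := by
  induction k with
  | zero => simp
  | succ k ih =>
    rw [Finset.sum_range_succ, ih, pow_succ]
    have h1 : 1 ≤ q ^ k := Nat.one_le_pow _ _ (by omega)
    have h2 : (q - 1) * q ^ k = q * q ^ k - q ^ k := by
      rw [Nat.sub_mul, one_mul]
    have h3 : q ^ k ≤ q * q ^ k := Nat.le_mul_of_pos_left _ (by omega)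
    rw [h2, Nat.mul_comm (q ^ k) q]; omega

lemma digitSum (P : ℕ) (hP : 0 < P) (k m : ℕ) :
    ∑ i ∈ range k, (m / P ^ i % P) * P ^ i = m % P ^ k := by
  induction k with
  | zero => simp [Nat.mod_one]
  | succ k ih =>
    rw [Finset.sum_range_succ, ih, pow_succ, Nat.mod_mul]
    ring

lemma lucasDigit (p : ℕ) [Fact p.Prime] (j N : ℕ) :
    ((N.choose (p ^ j) : ZMod p)) = ((N / p ^ j : ℕ) : ZMod p) := by
  induction j generalizing N with
  | zero => simp
  | succ j ih =>
    have hp : 0 < p := (Fact.out : p.Prime).pos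
    have step : (N.choose (p ^ (j + 1)) : ZMod p)
        = ((N % p).choose (p ^ (j + 1) % p) * ((N / p).choose (p ^ (j + 1) / p)) : ℕ) := by
      rw [ZMod.natCast_eq_natCast_iff]
      exact Choose.choose_modEq_choose_mod_mul_choose_div_nat
    have h1 : p ^ (j + 1) % p = 0 := by
      rw [pow_succ]; exact Nat.mul_mod_left _ _
    have h2 : p ^ (j + 1) / p = p ^ j := by
      rw [pow_succ]; exact Nat.mul_div_cancel _ hp
    rw [step, h1, h2, Nat.choose_zero_right, one_mul, ih, Nat.div_div_eq_div_mul, ← pow_succ']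

lemma descFactorial_cast (p : ℕ) [Fact p.Prime] (M i : ℕ) :
    ((M.descFactorial i : ℕ) : ZMod p) = ∏ t ∈ range i, ((M : ZMod p) - (t : ZMod p)) := by
  rw [Nat.descFactorial_eq_prod_range]
  rcases lt_or_ge M i with h | h
  · -- both sides zero: factor at t = M
    rw [Nat.cast_prod]
    rw [Finset.prod_eq_zero (Finset.mem_range.mpr h) (by simp),
        Finset.prod_eq_zero (Finset.mem_range.mpr h) (by simp)]
  · rw [Nat.cast_prod]
    refine Finset.prod_congr rfl fun t ht => ?_
    have : t ≤ M := le_trans (Nat.le_of_lt_succ (Nat.lt_succ_of_lt (Finset.mem_range.mp ht))) h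
    rw [Nat.cast_sub this]

lemma lemB (p : ℕ) [Fact p.Prime] (c i : ℕ) :
    ∃ g : Polynomial (ZMod p), g.natDegree ≤ i ∧
      ∀ y : ZMod p, g.eval y = (((c * y.val).choose i : ℕ) : ZMod p) := by
  have hp : p.Prime := Fact.out
  rcases le_or_gt i (p - 1) with hi | hi
  · -- explicit falling factorial formula
    refine ⟨Polynomial.C (((Nat.factorial i : ℕ) : ZMod p)⁻¹) *
      ∏ t ∈ range i, (Polynomial.C (c : ZMod p) * Polynomial.X - Polynomial.C (t : ZMod p)),
      ?_, ?_⟩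
    · refine le_trans (Polynomial.natDegree_mul_le) ?_
      rw [Polynomial.natDegree_C, zero_add]
      refine le_trans (Polynomial.natDegree_prod_le _ _) ?_
      calc ∑ t ∈ range i, (Polynomial.C (c : ZMod p) * Polynomial.X -
              Polynomial.C ((t : ℕ) : ZMod p)).natDegree
          ≤ ∑ _t ∈ range i, 1 := by
            refine Finset.sum_le_sum fun t _ => ?_
            refine le_trans (Polynomial.natDegree_sub_le _ _) ?_
            simp [Polynomial.natDegree_C_mul_le]
            exact le_trans (Polynomial.natDegree_C_mul_le _ _) (by simp)
        _ = i := by simp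
    · intro y
      have hfac : ((Nat.factorial i : ℕ) : ZMod p) ≠ 0 := by
        rw [Ne, ZMod.natCast_eq_zero_iff]
        intro hdvd
        exact absurd ((Nat.Prime.dvd_factorial hp).mp hdvd) (by have := hp.two_le; omega)
      set M := c * y.val with hM
      have hMcast : ((M : ℕ) : ZMod p) = (c : ZMod p) * y := by
        rw [hM, Nat.cast_mul, ZMod.natCast_val, ZMod.cast_id]
      have key : ((M.descFactorial i : ℕ) : ZMod p)
          = ((Nat.factorial i : ℕ) : ZMod p) * ((M.choose i : ℕ) : ZMod p) := by
        rw [Nat.descFactorial_eq_factorial_mul_choose, Nat.cast_mul]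
      have key2 := descFactorial_cast p M i
      simp only [Polynomial.eval_mul, Polynomial.eval_C, Polynomial.eval_prod,
        Polynomial.eval_sub, Polynomial.eval_X]
      rw [← hMcast, ← key2, key, ← mul_assoc, inv_mul_cancel₀ hfac, one_mul]
  · -- Lagrange interpolation
    set f : ZMod p → ZMod p := fun y => (((c * y.val).choose i : ℕ) : ZMod p) with hf
    have hinj : Set.InjOn (id : ZMod p → ZMod p) (Finset.univ : Finset (ZMod p)) :=
      Function.injective_id.injOn
    refine ⟨Lagrange.interpolate Finset.univ id f, ?_, ?_⟩
    · have hdeg := Lagrange.degree_interpolate_lt f hinj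
      rw [Finset.card_univ, ZMod.card] at hdeg
      have : (Lagrange.interpolate Finset.univ id f).natDegree ≤ p - 1 := by
        by_cases h0 : Lagrange.interpolate Finset.univ id f = 0
        · rw [h0]; simp
        · have := (Polynomial.natDegree_lt_iff_degree_lt h0).mpr hdeg
          omega
      omega
    · intro y
      have := Lagrange.eval_interpolate_at_node f hinj (Finset.mem_univ y)
      simpa using this

lemma totalDegree_emb (p : ℕ) [Fact p.Prime] {ι : Type*} (w : ι) (g : Polynomial (ZMod p)) :
    (Polynomial.eval₂ MvPolynomial.C (MvPolynomial.X w : MvPolynomial ι (ZMod p)) g).totalDegree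
      ≤ g.natDegree := by
  rw [Polynomial.eval₂_eq_sum_range]
  refine le_trans (MvPolynomial.totalDegree_finset_sum _ _) ?_
  refine Finset.sup_le fun i hi => ?_
  refine le_trans (MvPolynomial.totalDegree_mul _ _) ?_
  rw [MvPolynomial.totalDegree_C, zero_add]
  refine le_trans (MvPolynomial.totalDegree_pow _ _) ?_
  rw [MvPolynomial.totalDegree_X]
  simpa using Nat.le_of_lt_succ (Finset.mem_range.mp hi)

lemma eval_emb (p : ℕ) [Fact p.Prime] {ι : Type*} (y : ι → ZMod p) (w : ι)
    (g : Polynomial (ZMod p)) :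
    MvPolynomial.eval y (Polynomial.eval₂ MvPolynomial.C (MvPolynomial.X w) g)
      = Polynomial.eval (y w) g := by
  rw [Polynomial.hom_eval₂]
  have h1 : (MvPolynomial.eval y).comp (MvPolynomial.C) = RingHom.id (ZMod p) := by
    ext a; simp
  rw [h1, MvPolynomial.eval_X]
  rfl

lemma lemA (p : ℕ) [Fact p.Prime] {ι : Type*} [DecidableEq ι] (c : ι → ℕ) (V : Finset ι) :
    ∀ m : ℕ, ∃ F : MvPolynomial ι (ZMod p), F.totalDegree ≤ m ∧
      ∀ y : ι → ZMod p,
        MvPolynomial.eval y F = (((∑ v ∈ V, c v * (y v).val).choose m : ℕ) : ZMod p) := by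
  induction V using Finset.induction_on with
  | empty =>
    intro m
    exact ⟨MvPolynomial.C (((Nat.choose 0 m : ℕ)) : ZMod p), by rw [MvPolynomial.totalDegree_C]; omega, by simp⟩
  | insert _ _ hw =>
    rename_i w V ih
    intro m
    choose F' hF'deg hF'ev using ih
    choose g hgdeg hgev using lemB p (c w)
    refine ⟨∑ ij ∈ Finset.HasAntidiagonal.antidiagonal m,
      (Polynomial.eval₂ MvPolynomial.C (MvPolynomial.X w) (g ij.1)) * F' ij.2, ?_, ?_⟩
    · refine le_trans (MvPolynomial.totalDegree_finset_sum _ _) ?_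
      refine Finset.sup_le fun ij hij => ?_
      refine le_trans (MvPolynomial.totalDegree_mul _ _) ?_
      have h1 := le_trans (totalDegree_emb p w (g ij.1)) (hgdeg ij.1)
      have h2 := hF'deg ij.2
      have h3 : ij.1 + ij.2 = m := Finset.HasAntidiagonal.mem_antidiagonal.mp hij
      omega
    · intro y
      rw [map_sum]
      have hsum : ∑ v ∈ insert w V, c v * (y v).val
          = c w * (y w).val + ∑ v ∈ V, c v * (y v).val := Finset.sum_insert hw
      rw [hsum, Nat.add_choose_eq, Nat.cast_sum]
      refine Finset.sum_congr rfl fun ij _ => ?_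
      rw [map_mul, eval_emb, hgev, hF'ev, Nat.cast_mul]

noncomputable def reducePoly (p : ℕ) {ι : Type*} (Q : MvPolynomial ι (ZMod p)) :
    MvPolynomial ι (ZMod p) :=
  ∑ d ∈ Q.support,
    MvPolynomial.monomial (Finsupp.mapRange (redExp p) (redExp_zero p) d)
      (MvPolynomial.coeff d Q)

lemma eval_reducePoly (p : ℕ) [Fact p.Prime] {ι : Type*} (Q : MvPolynomial ι (ZMod p))
    (y : ι → ZMod p) :
    MvPolynomial.eval y (reducePoly p Q) = MvPolynomial.eval y Q := by
  rw [reducePoly, map_sum]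
  conv_rhs => rw [MvPolynomial.as_sum Q]
  rw [map_sum]
  refine Finset.sum_congr rfl fun d _ => ?_
  rw [MvPolynomial.eval_monomial, MvPolynomial.eval_monomial]
  congr 1
  rw [Finsupp.prod_mapRange_index (by simp)]
  exact Finsupp.prod_congr fun v _ => pow_redExp p (y v) (d v)

lemma totalDegree_reducePoly (p : ℕ) {ι : Type*} (Q : MvPolynomial ι (ZMod p)) :
    (reducePoly p Q).totalDegree ≤ Q.totalDegree := by
  refine le_trans (MvPolynomial.totalDegree_finset_sum _ _) (Finset.sup_le fun d hd => ?_)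
  have h1 : (MvPolynomial.monomial (Finsupp.mapRange (redExp p) (redExp_zero p) d)
      (MvPolynomial.coeff d Q)).totalDegree
      ≤ (Finsupp.mapRange (redExp p) (redExp_zero p) d).sum fun _ e => e := by
    by_cases hc : MvPolynomial.coeff d Q = 0
    · simp [hc]
    · rw [MvPolynomial.totalDegree_monomial _ hc]
  refine le_trans h1 ?_
  rw [Finsupp.sum_mapRange_index (by simp)]
  refine le_trans ?_ (MvPolynomial.le_totalDegree hd)
  exact Finset.sum_le_sum fun v _ => redExp_le_self p _

lemma degreeOf_reducePoly (p : ℕ) (hp2 : 2 ≤ p) {ι : Type*} (Q : MvPolynomial ι (ZMod p))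
    (v : ι) : (reducePoly p Q).degreeOf v ≤ p - 1 := by
  classical
  rw [MvPolynomial.degreeOf_eq_sup]
  refine Finset.sup_le fun d' hd' => ?_
  have hsub := MvPolynomial.support_sum (s := Q.support)
    (f := fun d => MvPolynomial.monomial (Finsupp.mapRange (redExp p) (redExp_zero p) d)
      (MvPolynomial.coeff d Q))
  obtain ⟨d, _, hd'2⟩ := Finset.mem_biUnion.mp (hsub hd')
  rw [MvPolynomial.support_monomial] at hd'2
  by_cases hc : MvPolynomial.coeff d Q = 0
  · rw [if_pos hc] at hd'2; exact absurd hd'2 (Finset.notMem_empty _)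
  · rw [if_neg hc, Finset.mem_singleton] at hd'2
    subst hd'2
    rw [Finsupp.mapRange_apply]
    exact redExp_le p _ hp2

end helpers

/-- The `i`-th base-`p` digit of the canonical representative of `x : ZMod (p ^ k)`,
as an element of `ZMod p`. -/
def baseDigit (p k : ℕ) (i : ℕ) (x : ZMod (p ^ k)) : ZMod p :=
  (((x.val / p ^ i) % p : ℕ) : ZMod p)

theorem stmt_11 (p : ℕ) (hp : p.Prime) (k n : ℕ) (hk : 1 ≤ k) (hn : 1 ≤ n)
    (D : ℕ) (hD : D = (p - 1) * ((2 * p - 2) ^ k - 1) / (2 * p - 3))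
    (u : Fin n → ZMod (p ^ k)) :
    ∃ Q : MvPolynomial (Fin n × Fin k) (ZMod p),
      Q.totalDegree ≤ D ∧
        (∀ v : Fin n × Fin k, Q.degreeOf v ≤ p - 1) ∧
        ∀ a : Fin n → ZMod (p ^ k),
          ((∑ s, a s * u s) ≠ 0 ↔
            MvPolynomial.eval (fun v => baseDigit p k (v.2 : ℕ) (a v.1)) Q = 0) := by
  classical
  haveI : Fact p.Prime := ⟨hp⟩
  have hp2 : 2 ≤ p := hp.two_le
  haveI : NeZero p := ⟨by omega⟩
  haveI : NeZero (p ^ k) := ⟨pow_ne_zero _ (by omega)⟩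
  set c : Fin n × Fin k → ℕ := fun v => (u v.1).val * p ^ (v.2 : ℕ) with hc
  choose f hfdeg hfev using lemA p c Finset.univ
  set Q0 : MvPolynomial (Fin n × Fin k) (ZMod p) :=
    ∏ j ∈ Finset.range k, (1 - (f (p ^ j)) ^ (p - 1)) with hQ0
  -- arithmetic: p ^ k - 1 ≤ D
  have hS : ∑ j ∈ Finset.range k, (2 * p - 3) * (2 * p - 2) ^ j = (2 * p - 2) ^ k - 1 := by
    have h := geoSum (2 * p - 2) k (by omega)
    have h23 : 2 * p - 2 - 1 = 2 * p - 3 := by omega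
    rw [← h23]; exact h
  have hD' : D = (p - 1) * ∑ j ∈ Finset.range k, (2 * p - 2) ^ j := by
    rw [hD, ← hS, ← Finset.mul_sum, ← mul_assoc, mul_comm (p - 1) (2 * p - 3), mul_assoc,
      Nat.mul_div_cancel_left _ (by omega : 0 < 2 * p - 3)]
  have hDk : p ^ k - 1 ≤ D := by
    rw [hD', Finset.mul_sum, ← geoSum p k (by omega)]
    refine Finset.sum_le_sum fun j _ => ?_
    exact Nat.mul_le_mul (by omega) (Nat.pow_le_pow_left (by omega) j)
  refine ⟨reducePoly p Q0, ?_, fun v => degreeOf_reducePoly p hp2 Q0 v, ?_⟩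
  · -- total degree
    refine le_trans (totalDegree_reducePoly p Q0) (le_trans ?_ hDk)
    rw [← geoSum p k (by omega), hQ0]
    refine le_trans (MvPolynomial.totalDegree_finset_prod _ _) ?_
    refine Finset.sum_le_sum fun j _ => ?_
    refine le_trans (MvPolynomial.totalDegree_sub _ _) ?_
    refine max_le (by simp) ?_
    refine le_trans (MvPolynomial.totalDegree_pow _ _) ?_
    exact Nat.mul_le_mul_left _ (hfdeg _)
  · intro a
    set x : ZMod (p ^ k) := ∑ s, a s * u s with hx
    set y : Fin n × Fin k → ZMod p := fun v => baseDigit p k (v.2 : ℕ) (a v.1) with hy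
    set N : ℕ := ∑ s, (u s).val * (a s).val with hN
    -- the inputs are digits
    have hyval : ∀ v : Fin n × Fin k, (y v).val = (a v.1).val / p ^ (v.2 : ℕ) % p := by
      intro v
      rw [hy]
      show (baseDigit p k (v.2 : ℕ) (a v.1)).val = _
      rw [baseDigit, ZMod.val_natCast]
      exact Nat.mod_mod_of_dvd _ dvd_rfl
    have hsumN : ∑ v : Fin n × Fin k, c v * (y v).val = N := by
      rw [Fintype.sum_prod_type]
      rw [hN]
      refine Finset.sum_congr rfl fun s _ => ?_
      have : ∀ i : Fin k, c (s, i) * (y (s, i)).val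
          = (u s).val * (((a s).val / p ^ (i : ℕ) % p) * p ^ (i : ℕ)) := by
        intro i
        rw [hyval ⟨s, i⟩, hc]
        ring
      rw [Finset.sum_congr rfl fun i _ => this i, ← Finset.mul_sum]
      congr 1
      rw [Fin.sum_univ_eq_sum_range (fun i => (a s).val / p ^ i % p * p ^ i) k]
      rw [digitSum p (by omega) k ((a s).val)]
      exact Nat.mod_eq_of_lt (ZMod.val_lt _)
    -- value of the digit polynomials
    have key : ∀ j : ℕ, MvPolynomial.eval y (f (p ^ j)) = ((N / p ^ j : ℕ) : ZMod p) := by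
      intro j
      rw [hfev (p ^ j) y]
      rw [show ∑ v ∈ Finset.univ, c v * (y v).val = N from hsumN]
      exact lucasDigit p j N
    -- x as a cast of N
    have hxN : ((N : ℕ) : ZMod (p ^ k)) = x := by
      rw [hN, Nat.cast_sum, hx]
      refine Finset.sum_congr rfl fun s _ => ?_
      rw [Nat.cast_mul, ZMod.natCast_rightInverse (u s), ZMod.natCast_rightInverse (a s)]
      ring
    have hxval : x.val = N % p ^ k := by rw [← hxN, ZMod.val_natCast]
    -- digits of x in terms of N
    have hdig : ∀ j : ℕ, j < k → baseDigit p k j x = ((N / p ^ j : ℕ) : ZMod p) := by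
      intro j hj
      rw [baseDigit, hxval]
      have hpk : p ^ k = p ^ j * p ^ (k - j) := by rw [← pow_add]; congr 1; omega
      rw [hpk, Nat.mod_mul_right_div_self,
        Nat.mod_mod_of_dvd _ (dvd_pow_self p (by omega : k - j ≠ 0)), ZMod.natCast_mod]
    -- evaluation of Q0
    have heval : MvPolynomial.eval y (reducePoly p Q0)
        = ∏ j ∈ Finset.range k, (1 - (baseDigit p k j x) ^ (p - 1)) := by
      rw [eval_reducePoly, hQ0, map_prod]
      refine Finset.prod_congr rfl fun j hj => ?_
      rw [map_sub, map_one, map_pow, key j, hdig j (Finset.mem_range.mp hj)]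
    -- digits all zero iff x = 0
    have hdigzero : ∀ j : ℕ, j < k → (baseDigit p k j x = 0 ↔ x.val / p ^ j % p = 0) := by
      intro j hj
      rw [baseDigit]
      constructor
      · intro h
        have hdvd := (ZMod.natCast_eq_zero_iff _ p).mp h
        exact Nat.eq_zero_of_dvd_of_lt hdvd (Nat.mod_lt _ (by omega))
      · intro h; rw [h, Nat.cast_zero]
    have hallzero : (∀ j : ℕ, j < k → x.val / p ^ j % p = 0) → x = 0 := by
      intro h
      have h1 : x.val % p ^ k = 0 := by
        rw [← digitSum p (by omega) k x.val]
        refine Finset.sum_eq_zero fun j hj => ?_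
        rw [h j (Finset.mem_range.mp hj), zero_mul]
      rw [Nat.mod_eq_of_lt (ZMod.val_lt x)] at h1
      exact (ZMod.val_eq_zero x).mp h1
    rw [heval]
    constructor
    · intro hx0
      have : ¬ ∀ j : ℕ, j < k → x.val / p ^ j % p = 0 := fun h => hx0 (hallzero h)
      push_neg at this
      obtain ⟨j, hj, hdj⟩ := this
      have hdj' : baseDigit p k j x ≠ 0 := fun h => hdj ((hdigzero j hj).mp h)
      refine Finset.prod_eq_zero (Finset.mem_range.mpr hj) ?_
      rw [ZMod.pow_card_sub_one_eq_one hdj', sub_self]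
    · intro hev hx0
      obtain ⟨j, hj, hfac⟩ := Finset.prod_eq_zero_iff.mp hev
      have hxv : x.val = 0 := (ZMod.val_eq_zero x).mpr hx0
      have : baseDigit p k j x = 0 := by
        apply (hdigzero j (Finset.mem_range.mp hj)).mpr
        rw [hxv, Nat.zero_div, Nat.zero_mod]
      rw [this, zero_pow (by omega : p - 1 ≠ 0), sub_zero] at hfac
      exact one_ne_zero hfac
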